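/- The minimizer x₀ of f(x) = ℓ(ỹ·x) + (c/2)·Σ_j (x - a_j)² (with ỹ ∈ {-1,0,1}, c > 0, d ≥ 1) lies in the interval [b - 1/(c·d), b + 1/(c·d)], where b = (1/d)·Σ_j a_j; in particular, if c·d ≥ 1 it lies in [b-1, b+1]. -/

import Mathlib

lemma ell_lip (z w : ℝ) :
    Real.log (1 + Real.exp (-z)) - Real.log (1 + Real.exp (-w)) ≤ |z - w| := by
  rcases le_total z w with h | h
  · have hexp : Real.exp (w - z) * Real.exp (-w) = Real.exp (-z) := by
      rw [← Real.exp_add]; ring_nf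
    have h2 : (1:ℝ) ≤ Real.exp (w - z) := Real.one_le_exp (by linarith)
    have h1 : (1 : ℝ) + Real.exp (-z) ≤ Real.exp (w - z) * (1 + Real.exp (-w)) := by
      nlinarith [Real.exp_pos (-w), Real.exp_pos (-z)]
    have hlog := Real.log_le_log (by positivity) h1
    rw [Real.log_mul (by positivity) (by positivity), Real.log_exp] at hlog
    rw [abs_of_nonpos (by linarith)]
    linarith
  · have hmono : Real.log (1 + Real.exp (-z)) ≤ Real.log (1 + Real.exp (-w)) := by
      apply Real.log_le_log (by positivity)
      have := Real.exp_le_exp.mpr (neg_le_neg h)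
      linarith
    have := abs_nonneg (z - w)
    linarith

theorem minimizer_in_interval
    (ytil : ℝ) (hy : ytil ∈ ({-1, 0, 1} : Set ℝ))
    (c : ℝ) (hc : 0 < c)
    (d : ℕ) (hd : 1 ≤ d) (a : Fin d → ℝ)
    (b : ℝ) (hb : b = (1 / (d : ℝ)) * ∑ j, a j)
    (x₀ : ℝ)
    (hmin : ∀ x : ℝ,
      Real.log (1 + Real.exp (-(ytil * x₀))) + (c / 2) * ∑ j, (x₀ - a j) ^ 2
        ≤ Real.log (1 + Real.exp (-(ytil * x))) + (c / 2) * ∑ j, (x - a j) ^ 2) :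
    x₀ ∈ Set.Icc (b - 1 / (c * (d : ℝ))) (b + 1 / (c * (d : ℝ)))
      ∧ (1 ≤ c * (d : ℝ) → x₀ ∈ Set.Icc (b - 1) (b + 1)) := by
  have hD : (1:ℝ) ≤ (d:ℝ) := by exact_mod_cast hd
  have hD0 : (0:ℝ) < (d:ℝ) := by linarith
  have hyabs : |ytil| ≤ 1 := by
    simp only [Set.mem_insert_iff, Set.mem_singleton_iff] at hy
    rcases hy with h | h | h <;> simp [h]
  have hSa : ∑ j, a j = (d:ℝ) * b := by
    rw [hb]; field_simp
  have hsum : ∀ x : ℝ, ∑ j, (x - a j) ^ 2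
      = (d:ℝ) * (x - b) ^ 2 + (∑ j, (a j) ^ 2 - (d:ℝ) * b ^ 2) := by
    intro x
    have h1 : ∑ j, (x - a j) ^ 2 = ∑ j, (x ^ 2 - 2 * x * a j + (a j) ^ 2) := by
      apply Finset.sum_congr rfl; intros; ring
    rw [h1]
    rw [Finset.sum_add_distrib, Finset.sum_sub_distrib, Finset.sum_const,
      ← Finset.mul_sum, hSa]
    simp [Finset.card_univ]
    ring
  have key : ∀ x : ℝ, c * (d:ℝ) / 2 * ((x₀ - b) ^ 2 - (x - b) ^ 2) ≤ |x₀ - x| := by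
    intro x
    have h1 := hmin x
    have hlip := ell_lip (ytil * x) (ytil * x₀)
    have habs : |ytil * x - ytil * x₀| ≤ |x₀ - x| := by
      rw [← mul_sub, abs_mul]
      calc |ytil| * |x - x₀| ≤ 1 * |x - x₀| := by
            apply mul_le_mul_of_nonneg_right hyabs (abs_nonneg _)
        _ = |x₀ - x| := by rw [one_mul, abs_sub_comm]
    rw [hsum x, hsum x₀] at h1
    nlinarith [h1, hlip, habs]
  set s : ℝ := 1 / (c * (d:ℝ)) with hs
  have hcd : (0:ℝ) < c * (d:ℝ) := by positivity
  have hs0 : 0 < s := by positivity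
  have hcds : c * (d:ℝ) * s = 1 := by rw [hs, mul_one_div_cancel hcd.ne']
  have hub : x₀ ≤ b + s := by
    by_contra h; push_neg at h
    have hk := key (b + s)
    rw [abs_of_pos (by linarith)] at hk
    nlinarith [hk]
  have hlb : b - s ≤ x₀ := by
    by_contra h; push_neg at h
    have hk := key (b - s)
    rw [abs_of_neg (by linarith)] at hk
    nlinarith [hk]
  refine ⟨⟨hlb, hub⟩, fun h1 => ?_⟩
  have : s ≤ 1 := by
    rw [hs]
    rw [div_le_one hcd]; exact h1
  exact ⟨by linarith, by linarith⟩
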